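/- arXiv:2112.01235 — 6 statements merged into one kernel-verified Lean document; each statement's English description precedes it below -/
import Mathlib

section
/- Let $c = \cos\theta$ and $\rho^2 = r^2 + a^2 c^2 \neq 0$, and let $\Psi_2 = -\frac{i\, c\, m a + m r - q^2}{(r - i a c)^3 (r + i a c)}$ be the complex Weyl scalar of the Kerr–Newman–(anti)-de Sitter metric (viewed as a complex-valued function of the real variables $r, \theta, a, m, q$). Define $I_1 = \frac{48}{\rho^{12}}\big(-a^3 m c^3 + (-3 a^2 m r + a^2 q^2) c^2 + (3 a m r^2 - 2 a q^2 r) c + (m r - q^2) r^2\big)\big(a^3 m c^3 + (-3 a^2 m r + a^2 q^2) c^2 + (-3 a m r^2 + 2 a q^2 r) c + (m r - q^2) r^2\big)$ and $K_2 = \frac{96 a}{\rho^{12}}\,(a^2 m c^3 - 3 m r^2 c + 2 q^2 r c)\,(-3 a^2 c^2 m r + a^2 c^2 q^2 + m r^3 - q^2 r^2)$. Then $I_1 - i K_2 = 48\,\Psi_2^2$. -/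
open Complex

/-- `I₁ - i K₂ = 48 Ψ₂²` for the Kerr–Newman–(anti)-de Sitter black hole. -/
theorem weyl_invariant_NP_relation
    (r θ a m q : ℝ) (c ρ2 : ℝ)
    (hc : c = Real.cos θ) (hρ2 : ρ2 = r ^ 2 + a ^ 2 * c ^ 2) (hρ : ρ2 ≠ 0)
    (Ψ2 : ℂ)
    (hΨ2 : Ψ2 = -((Complex.I * c * m * a + m * r - q ^ 2) /
        (((r : ℂ) - Complex.I * a * c) ^ 3 * ((r : ℂ) + Complex.I * a * c))))
    (I1 K2 : ℝ)
    (hI1 : I1 = (48 / ρ2 ^ 6) *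
      (-(a ^ 3 * m * c ^ 3) + (-(3 * a ^ 2 * m * r) + a ^ 2 * q ^ 2) * c ^ 2
        + (3 * a * m * r ^ 2 - 2 * a * q ^ 2 * r) * c + (m * r - q ^ 2) * r ^ 2) *
      (a ^ 3 * m * c ^ 3 + (-(3 * a ^ 2 * m * r) + a ^ 2 * q ^ 2) * c ^ 2
        + (-(3 * a * m * r ^ 2) + 2 * a * q ^ 2 * r) * c + (m * r - q ^ 2) * r ^ 2))
    (hK2 : K2 = (96 * a / ρ2 ^ 6) *
      (a ^ 2 * m * c ^ 3 - 3 * m * r ^ 2 * c + 2 * q ^ 2 * r * c) *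
      (-(3 * a ^ 2 * c ^ 2 * m * r) + a ^ 2 * c ^ 2 * q ^ 2 + m * r ^ 3 - q ^ 2 * r ^ 2)) :
    (I1 : ℂ) - Complex.I * K2 = 48 * Ψ2 ^ 2 := by
  have hfac : ((r : ℂ) - Complex.I * a * c) * ((r : ℂ) + Complex.I * a * c) = (ρ2 : ℂ) := by
    rw [hρ2]; push_cast; linear_combination (-(a:ℂ)^2*c^2) * Complex.I_sq
  have hρc : (ρ2 : ℂ) ≠ 0 := by exact_mod_cast hρ
  have h1 : ((r : ℂ) - Complex.I * a * c) ≠ 0 := fun h => hρc (by rw [← hfac, h, zero_mul])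
  have h2 : ((r : ℂ) + Complex.I * a * c) ≠ 0 := fun h => hρc (by rw [← hfac, h, mul_zero])
  subst hΨ2 hI1 hK2
  push_cast
  field_simp
  rw [show ((ρ2:ℂ))^6 = (((r:ℂ) - Complex.I*a*c)*((r:ℂ) + Complex.I*a*c))^6 from by rw [hfac]]
  rw [eq_div_iff (mul_ne_zero (pow_ne_zero _ (by convert h1 using 1; ring)) (pow_ne_zero _ (by convert h2 using 1; ring)))]
  linear_combination ((-48*(a:ℂ)^14*(c:ℂ)^14*(m:ℂ)^2*Complex.I^12) + (-96*(a:ℂ)^13*(c:ℂ)^13*(m:ℂ)^2*(r:ℂ)*Complex.I^11) + (96*(a:ℂ)^13*(c:ℂ)^13*(m:ℂ)*(q:ℂ)^2*Complex.I^11) + (240*(a:ℂ)^12*(c:ℂ)^12*(m:ℂ)^2*(r:ℂ)^2*Complex.I^10) + (96*(a:ℂ)^12*(c:ℂ)^12*(m:ℂ)*(q:ℂ)^2*(r:ℂ)*Complex.I^10) + (-48*(a:ℂ)^12*(c:ℂ)^12*(q:ℂ)^4*Complex.I^10) + (48*(a:ℂ)^14*(c:ℂ)^14*(m:ℂ)^2*Complex.I^10)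 + (576*(a:ℂ)^11*(c:ℂ)^11*(m:ℂ)^2*(r:ℂ)^3*Complex.I^9) + (-576*(a:ℂ)^11*(c:ℂ)^11*(m:ℂ)*(q:ℂ)^2*(r:ℂ)^2*Complex.I^9) + (96*(a:ℂ)^13*(c:ℂ)^13*(m:ℂ)^2*(r:ℂ)*Complex.I^9) + (-96*(a:ℂ)^13*(c:ℂ)^13*(m:ℂ)*(q:ℂ)^2*Complex.I^9) + (-432*(a:ℂ)^10*(c:ℂ)^10*(m:ℂ)^2*(r:ℂ)^4*Complex.I^8) + (-576*(a:ℂ)^10*(c:ℂ)^10*(m:ℂ)*(q:ℂ)^2*(r:ℂ)^3*Complex.I^8) + (288*(a:ℂ)^10*(c:ℂ)^10*(q:ℂ)^4*(r:ℂ)^2*Complex.I^8) + (-240*(a:ℂ)^12*(c:ℂ)^12*(m:ℂ)^2*(r:ℂ)^2*Complex.I^8) + (-96*(a:ℂ)^12*(c:ℂ)^12*(m:ℂ)*(q:ℂ)^2*(r:ℂ)*Complex.I^8) + (48*(a:ℂ)^12*(c:ℂ)^12*(q:ℂ)^4*Complex.I^8) + (-48*(a:ℂ)^14*(c:ℂ)^14*(m:ℂ)^2*Complex.I^8)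 + (192*(a:ℂ)^13*(c:ℂ)^13*(m:ℂ)^2*(r:ℂ)*Complex.I^7) + (-1536*(a:ℂ)^11*(c:ℂ)^11*(m:ℂ)^2*(r:ℂ)^3*Complex.I^7) + (1536*(a:ℂ)^11*(c:ℂ)^11*(m:ℂ)*(q:ℂ)^2*(r:ℂ)^2*Complex.I^7) + (-1152*(a:ℂ)^9*(c:ℂ)^9*(m:ℂ)^2*(r:ℂ)^5*Complex.I^7) + (960*(a:ℂ)^9*(c:ℂ)^9*(m:ℂ)*(q:ℂ)^2*(r:ℂ)^4*Complex.I^7) + (-192*(a:ℂ)^11*(c:ℂ)^11*(q:ℂ)^4*(r:ℂ)*Complex.I^7) + (192*(a:ℂ)^9*(c:ℂ)^9*(q:ℂ)^4*(r:ℂ)^3*Complex.I^7) + (-192*(a:ℂ)^12*(c:ℂ)^12*(m:ℂ)^2*(r:ℂ)^2*Complex.I^6) + (3552*(a:ℂ)^10*(c:ℂ)^10*(m:ℂ)^2*(r:ℂ)^4*Complex.I^6) + (-2304*(a:ℂ)^10*(c:ℂ)^10*(m:ℂ)*(q:ℂ)^2*(r:ℂ)^3*Complex.I^6) + (192*(a:ℂ)^10*(c:ℂ)^10*(q:ℂ)^4*(r:ℂ)^2*Complex.I^6)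 + (-864*(a:ℂ)^8*(c:ℂ)^8*(m:ℂ)^2*(r:ℂ)^6*Complex.I^6) + (3264*(a:ℂ)^8*(c:ℂ)^8*(m:ℂ)*(q:ℂ)^2*(r:ℂ)^5*Complex.I^6) + (-1440*(a:ℂ)^8*(c:ℂ)^8*(q:ℂ)^4*(r:ℂ)^4*Complex.I^6) + (-192*(a:ℂ)^11*(c:ℂ)^11*(m:ℂ)^2*(r:ℂ)^3*Complex.I^5) + (192*(a:ℂ)^9*(c:ℂ)^9*(m:ℂ)^2*(r:ℂ)^5*Complex.I^5) + (192*(a:ℂ)^9*(c:ℂ)^9*(q:ℂ)^4*(r:ℂ)^3*Complex.I^5) + (2880*(a:ℂ)^7*(c:ℂ)^7*(m:ℂ)^2*(r:ℂ)^7*Complex.I^5) + (-3456*(a:ℂ)^7*(c:ℂ)^7*(m:ℂ)*(q:ℂ)^2*(r:ℂ)^6*Complex.I^5) + (576*(a:ℂ)^7*(c:ℂ)^7*(q:ℂ)^4*(r:ℂ)^5*Complex.I^5) + (-960*(a:ℂ)^9*(c:ℂ)^9*(m:ℂ)*(q:ℂ)^2*(r:ℂ)^4*Complex.I^5) + (480*(a:ℂ)^10*(c:ℂ)^10*(m:ℂ)^2*(r:ℂ)^4*Complex.I^4)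 + (-5856*(a:ℂ)^8*(c:ℂ)^8*(m:ℂ)^2*(r:ℂ)^6*Complex.I^4) + (4416*(a:ℂ)^8*(c:ℂ)^8*(m:ℂ)*(q:ℂ)^2*(r:ℂ)^5*Complex.I^4) + (-480*(a:ℂ)^8*(c:ℂ)^8*(q:ℂ)^4*(r:ℂ)^4*Complex.I^4) + (1584*(a:ℂ)^6*(c:ℂ)^6*(m:ℂ)^2*(r:ℂ)^8*Complex.I^4) + (-4224*(a:ℂ)^6*(c:ℂ)^6*(m:ℂ)*(q:ℂ)^2*(r:ℂ)^7*Complex.I^4) + (1920*(a:ℂ)^6*(c:ℂ)^6*(q:ℂ)^4*(r:ℂ)^6*Complex.I^4) + (3840*(a:ℂ)^7*(c:ℂ)^7*(m:ℂ)^2*(r:ℂ)^7*Complex.I^3) + (-2304*(a:ℂ)^7*(c:ℂ)^7*(m:ℂ)*(q:ℂ)^2*(r:ℂ)^6*Complex.I^3) + (192*(a:ℂ)^7*(c:ℂ)^7*(q:ℂ)^4*(r:ℂ)^5*Complex.I^3) + (-4128*(a:ℂ)^5*(c:ℂ)^5*(m:ℂ)^2*(r:ℂ)^9*Complex.I^3)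 + (5856*(a:ℂ)^5*(c:ℂ)^5*(m:ℂ)*(q:ℂ)^2*(r:ℂ)^8*Complex.I^3) + (-1728*(a:ℂ)^5*(c:ℂ)^5*(q:ℂ)^4*(r:ℂ)^7*Complex.I^3) + (-192*(a:ℂ)^9*(c:ℂ)^9*(m:ℂ)^2*(r:ℂ)^5*Complex.I^3) + (-192*(a:ℂ)^8*(c:ℂ)^8*(m:ℂ)^2*(r:ℂ)^6*Complex.I^2) + (1776*(a:ℂ)^6*(c:ℂ)^6*(m:ℂ)^2*(r:ℂ)^8*Complex.I^2) + (-1536*(a:ℂ)^6*(c:ℂ)^6*(m:ℂ)*(q:ℂ)^2*(r:ℂ)^7*Complex.I^2) + (192*(a:ℂ)^6*(c:ℂ)^6*(q:ℂ)^4*(r:ℂ)^6*Complex.I^2) + (240*(a:ℂ)^4*(c:ℂ)^4*(m:ℂ)^2*(r:ℂ)^10*Complex.I^2) + (480*(a:ℂ)^4*(c:ℂ)^4*(m:ℂ)*(q:ℂ)^2*(r:ℂ)^9*Complex.I^2) + (-432*(a:ℂ)^4*(c:ℂ)^4*(q:ℂ)^4*(r:ℂ)^8*Complex.I^2) + (192*(a:ℂ)^7*(c:ℂ)^7*(m:ℂ)^2*(r:ℂ)^7*Complex.I)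 + (-2592*(a:ℂ)^5*(c:ℂ)^5*(m:ℂ)^2*(r:ℂ)^9*Complex.I) + (1824*(a:ℂ)^5*(c:ℂ)^5*(m:ℂ)*(q:ℂ)^2*(r:ℂ)^8*Complex.I) + (-192*(a:ℂ)^5*(c:ℂ)^5*(q:ℂ)^4*(r:ℂ)^7*Complex.I) + (1920*(a:ℂ)^3*(c:ℂ)^3*(m:ℂ)^2*(r:ℂ)^11*Complex.I) + (-2880*(a:ℂ)^3*(c:ℂ)^3*(m:ℂ)*(q:ℂ)^2*(r:ℂ)^10*Complex.I) + (960*(a:ℂ)^3*(c:ℂ)^3*(q:ℂ)^4*(r:ℂ)^9*Complex.I) + (-48*(a:ℂ)^6*(c:ℂ)^6*(m:ℂ)^2*(r:ℂ)^8) + (720*(a:ℂ)^4*(c:ℂ)^4*(m:ℂ)^2*(r:ℂ)^10) + (48*(a:ℂ)^4*(c:ℂ)^4*(q:ℂ)^4*(r:ℂ)^8) + (-720*(a:ℂ)^2*(c:ℂ)^2*(m:ℂ)^2*(r:ℂ)^12) + (960*(a:ℂ)^2*(c:ℂ)^2*(m:ℂ)*(q:ℂ)^2*(r:ℂ)^11)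 + (-288*(a:ℂ)^2*(c:ℂ)^2*(q:ℂ)^4*(r:ℂ)^10) + (-480*(a:ℂ)^4*(c:ℂ)^4*(m:ℂ)*(q:ℂ)^2*(r:ℂ)^9)) * Complex.I_sq
end

section
/- Let $c = \cos\theta$, $\rho^2 = r^2 + a^2 c^2 \neq 0$. Define the complex quantities $\mathbb{I} = -\frac{96\left(\frac{c^2 a^2 m^2}{2} + (-i a m^2 r + i m q^2 a) c - \frac{m^2 r^2}{2} + m q^2 r - \frac{q^4}{2}\right)}{\rho^4 (r - i a c)^4}$, $\mathbb{K} = I_9 + i I_{10}$ where $I_9 = -\frac{16 q^4 (-3 a^2 c^2 m r + a^2 c^2 q^2 + m r^3 - q^2 r^2)}{\rho^{14}}$ and $I_{10} = \frac{16 a q^4 (a^2 m c^3 - 3 m r^2 c + 2 q^2 r c)}{\rho^{14}}$, and $\mathbb{L} = -\frac{128 q^4 \left(\frac{c^2 a^2 m^2}{2} + (-i a m^2 r + i m q^2 a) c - \frac{m^2 r^2}{2} + m q^2 r - \frac{q^4}{2}\right)}{\rho^{12} (r - i a c)^4}$. Then $3\,\mathbb{L}^2 = \mathbb{I}\,\mathbb{K}^2$.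 -/
set_option maxHeartbeats 4000000
open Complex

/-- Syzygy `3 𝕃² = 𝕀 𝕂²` for the Kerr–Newman–(anti)-de Sitter black hole. -/
theorem syzygy_3L2_eq_IK2
    (r θ a m q : ℝ) (c ρ2 : ℝ)
    (hc : c = Real.cos θ) (hρ2 : ρ2 = r ^ 2 + a ^ 2 * c ^ 2) (hρ : ρ2 ≠ 0)
    (𝕀 𝕂 𝕃 : ℂ) (I9 I10 : ℝ)
    (hI : 𝕀 = -(96 * ((c ^ 2 * a ^ 2 * m ^ 2 / 2)
        + (-(Complex.I * a * m ^ 2 * r) + Complex.I * m * q ^ 2 * a) * c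
        - m ^ 2 * r ^ 2 / 2 + m * q ^ 2 * r - q ^ 4 / 2)
        / ((ρ2 : ℂ) ^ 2 * ((r : ℂ) - Complex.I * a * c) ^ 4)))
    (hI9 : I9 = -(16 * q ^ 4 *
        (-(3 * a ^ 2 * c ^ 2 * m * r) + a ^ 2 * c ^ 2 * q ^ 2 + m * r ^ 3 - q ^ 2 * r ^ 2)
        / ρ2 ^ 7))
    (hI10 : I10 = 16 * a * q ^ 4 *
        (a ^ 2 * m * c ^ 3 - 3 * m * r ^ 2 * c + 2 * q ^ 2 * r * c) / ρ2 ^ 7)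
    (hK : 𝕂 = (I9 : ℂ) + Complex.I * I10)
    (hL : 𝕃 = -(128 * (q : ℂ) ^ 4 * ((c ^ 2 * a ^ 2 * m ^ 2 / 2)
        + (-(Complex.I * a * m ^ 2 * r) + Complex.I * m * q ^ 2 * a) * c
        - m ^ 2 * r ^ 2 / 2 + m * q ^ 2 * r - q ^ 4 / 2)
        / ((ρ2 : ℂ) ^ 6 * ((r : ℂ) - Complex.I * a * c) ^ 4))) :
    3 * 𝕃 ^ 2 = 𝕀 * 𝕂 ^ 2 := by
  have hρc : (ρ2 : ℂ) ≠ 0 := by exact_mod_cast hρ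
  have hfac : ((r : ℂ) - Complex.I * a * c) * ((r : ℂ) + Complex.I * a * c) = (ρ2 : ℂ) := by
    rw [hρ2]; push_cast
    linear_combination (-(a:ℂ)^2 * c^2) * Complex.I_sq
  have hz : ((r : ℂ) - Complex.I * a * c) ≠ 0 := by
    intro h
    have hre : ((r : ℂ) - Complex.I * a * c).re = 0 := by rw [h]; simp
    have him : ((r : ℂ) - Complex.I * a * c).im = 0 := by rw [h]; simp
    simp [Complex.sub_im, Complex.sub_re] at hre him
    apply hρ
    rw [hρ2, hre]
    norm_num
    rcases him with h1 | h1 <;> simp [h1]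
  have hzb : ((r : ℂ) + Complex.I * a * c) ≠ 0 := by
    intro h
    exact hρc (by rw [← hfac, h, mul_zero])
  have hI2 : 𝕀 = 48 * ((m:ℂ) * ((r : ℂ) + Complex.I * a * c) - q ^ 2) ^ 2
      / ((ρ2 : ℂ) ^ 2 * ((r : ℂ) - Complex.I * a * c) ^ 4) := by
    rw [hI]
    linear_combination (-(48 * (a:ℂ)^2 * c^2 * m^2)
      / ((ρ2 : ℂ) ^ 2 * ((r : ℂ) - Complex.I * a * c) ^ 4)) * Complex.I_sq
  have hL2 : 𝕃 = 64 * (q:ℂ) ^ 4 * ((m:ℂ) * ((r : ℂ) + Complex.I * a * c) - q ^ 2) ^ 2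
      / ((ρ2 : ℂ) ^ 6 * ((r : ℂ) - Complex.I * a * c) ^ 4) := by
    rw [hL]
    linear_combination (-(64 * (q:ℂ)^4 * (a:ℂ)^2 * c^2 * m^2)
      / ((ρ2 : ℂ) ^ 6 * ((r : ℂ) - Complex.I * a * c) ^ 4)) * Complex.I_sq
  have hK2 : 𝕂 = -(16 * (q:ℂ) ^ 4 * ((m:ℂ) * ((r : ℂ) + Complex.I * a * c) - q ^ 2)
      * ((r : ℂ) + Complex.I * a * c) ^ 2 / (ρ2 : ℂ) ^ 7) := by
    rw [hK, hI9, hI10]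
    push_cast
    linear_combination (16 * (q:ℂ)^4 * (3 * r * a^2 * c^2 * m - a^2 * c^2 * q^2
      + a^3 * c^3 * m * Complex.I) / (ρ2 : ℂ) ^ 7) * Complex.I_sq
  rw [hI2, hL2, hK2, ← hfac]
  field_simp
  ring
end

section
/- Let $c = \cos\theta$, $\rho^2 = r^2 + a^2 c^2 \neq 0$, and let $I_5 = 4\Lambda$, $I_6 = \frac{4 q^4}{\rho^8} + 4\Lambda^2$, $\mathbb{M}_1 = I_{15} = \frac{4 q^4 (c^2 a^2 m^2 + r^2 m^2 - 2 m q^2 r + q^4)}{\rho^{16}}$, and $\mathbb{K} = I_9 + i I_{10}$ with $I_9 = -\frac{16 q^4(-3 a^2 c^2 m r + a^2 c^2 q^2 + m r^3 - q^2 r^2)}{\rho^{14}}$, $I_{10} = \frac{16 a q^4 (a^2 m c^3 - 3 m r^2 c + 2 q^2 r c)}{\rho^{14}}$. Then $16\,(I_6 - \tfrac{1}{4} I_5^2)\,\mathbb{M}_1 = |\mathbb{K}|^2$. -/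
open Complex

/-- Syzygy `16 (I₆ - I₅²/4) 𝕄₁ = |𝕂|²` for the Kerr–Newman–(anti)-de Sitter black hole. -/
theorem syzygy_M1_K_modulus
    (r θ a m q Λ : ℝ) (c ρ2 : ℝ)
    (hc : c = Real.cos θ) (hρ2 : ρ2 = r ^ 2 + a ^ 2 * c ^ 2) (hρ : ρ2 ≠ 0)
    (I5 I6 M1 I9 I10 : ℝ) (𝕂 : ℂ)
    (hI5 : I5 = 4 * Λ)
    (hI6 : I6 = 4 * q ^ 4 / ρ2 ^ 4 + 4 * Λ ^ 2)
    (hM1 : M1 = 4 * q ^ 4 * (c ^ 2 * a ^ 2 * m ^ 2 + r ^ 2 * m ^ 2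
        - 2 * m * q ^ 2 * r + q ^ 4) / ρ2 ^ 8)
    (hI9 : I9 = -(16 * q ^ 4 *
        (-(3 * a ^ 2 * c ^ 2 * m * r) + a ^ 2 * c ^ 2 * q ^ 2 + m * r ^ 3 - q ^ 2 * r ^ 2)
        / ρ2 ^ 7))
    (hI10 : I10 = 16 * a * q ^ 4 *
        (a ^ 2 * m * c ^ 3 - 3 * m * r ^ 2 * c + 2 * q ^ 2 * r * c) / ρ2 ^ 7)
    (hK : 𝕂 = (I9 : ℂ) + Complex.I * I10) :
    ((16 * (I6 - (1 / 4) * I5 ^ 2) * M1 : ℝ) : ℂ) = 𝕂 * (starRingEnd ℂ) 𝕂 := by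
  have key : 16 * (I6 - (1 / 4) * I5 ^ 2) * M1 = I9 ^ 2 + I10 ^ 2 := by
    subst hI5 hI6 hM1 hI9 hI10 hρ2
    have h : (r ^ 2 + a ^ 2 * c ^ 2) ≠ 0 := hρ
    field_simp
    ring
  rw [hK]
  have h2 := congrArg (fun x : ℝ => (x : ℂ)) key
  push_cast at h2
  simp only [map_add, map_mul, Complex.conj_I, Complex.conj_ofReal]
  push_cast
  linear_combination h2 + (I10 : ℂ) ^ 2 * Complex.I_sq
end

section
/- Let $c = \cos\theta$, $\rho^2 = r^2 + a^2 c^2 \neq 0$. Define $I_5 = 4\Lambda$, $I_6 = \frac{4 q^4}{\rho^8} + 4\Lambda^2$, the complex quantities $\mathbb{I} = -\frac{96\left(\frac{c^2 a^2 m^2}{2} + (-i a m^2 r + i m q^2 a) c - \frac{m^2 r^2}{2} + m q^2 r - \frac{q^4}{2}\right)}{\rho^4 (r - i a c)^4}$, $\mathbb{K} = I_9 + i I_{10}$ (with $I_9, I_{10}$ as in the Kerr–Newman–(anti)-de Sitter closed forms), and $\mathbb{M}_2 = -\frac{8 q^4 (c^2 a^2 m^2 + m^2 r^2 - 2 m r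 q^2 + q^4)(i c a m + m r - q^2)}{\rho^{18} (a^2 c^2 + 2 i c a r - r^2)}$. Then $3072\,(I_6 - \tfrac{1}{4} I_5^2)^2\,\mathbb{M}_2^2 = \mathbb{I}\,\mathbb{K}^2\,\overline{\mathbb{K}}^2$. -/
open Complex

/-- Syzygy `3072 (I₆ - I₅²/4)² 𝕄₂² = 𝕀 𝕂² (conj 𝕂)²` for Kerr–Newman–(anti)-de Sitter. -/
theorem syzygy_M2_squared
    (r θ a m q Λ : ℝ) (c ρ2 : ℝ)
    (hc : c = Real.cos θ) (hρ2 : ρ2 = r ^ 2 + a ^ 2 * c ^ 2) (hρ : ρ2 ≠ 0)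
    (I5 I6 I9 I10 : ℝ) (𝕀 𝕂 M2 : ℂ)
    (hI5 : I5 = 4 * Λ)
    (hI6 : I6 = 4 * q ^ 4 / ρ2 ^ 4 + 4 * Λ ^ 2)
    (hI : 𝕀 = -(96 * ((c ^ 2 * a ^ 2 * m ^ 2 / 2)
        + (-(Complex.I * a * m ^ 2 * r) + Complex.I * m * q ^ 2 * a) * c
        - m ^ 2 * r ^ 2 / 2 + m * q ^ 2 * r - q ^ 4 / 2)
        / ((ρ2 : ℂ) ^ 2 * ((r : ℂ) - Complex.I * a * c) ^ 4)))
    (hI9 : I9 = -(16 * q ^ 4 *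
        (-(3 * a ^ 2 * c ^ 2 * m * r) + a ^ 2 * c ^ 2 * q ^ 2 + m * r ^ 3 - q ^ 2 * r ^ 2)
        / ρ2 ^ 7))
    (hI10 : I10 = 16 * a * q ^ 4 *
        (a ^ 2 * m * c ^ 3 - 3 * m * r ^ 2 * c + 2 * q ^ 2 * r * c) / ρ2 ^ 7)
    (hK : 𝕂 = (I9 : ℂ) + Complex.I * I10)
    (hM2 : M2 = -(8 * (q : ℂ) ^ 4 *
        ((c : ℂ) ^ 2 * a ^ 2 * m ^ 2 + m ^ 2 * r ^ 2 - 2 * m * r * q ^ 2 + q ^ 4) *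
        (Complex.I * c * a * m + m * r - q ^ 2)
        / ((ρ2 : ℂ) ^ 9 * ((a : ℂ) ^ 2 * c ^ 2 + 2 * Complex.I * c * a * r - r ^ 2)))) :
    3072 * ((I6 - (1 / 4) * I5 ^ 2 : ℝ) : ℂ) ^ 2 * M2 ^ 2
      = 𝕀 * 𝕂 ^ 2 * ((starRingEnd ℂ) 𝕂) ^ 2 := by
  have hI2 : Complex.I ^ 2 = -1 := Complex.I_sq
  have hKc : (starRingEnd ℂ) 𝕂 = (I9 : ℂ) - Complex.I * I10 := by
    rw [hK]; simp [Complex.conj_ofReal]; ring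
  subst hI5 hI6 hI9 hI10 hρ2
  have hρC : (((r : ℝ) ^ 2 + a ^ 2 * c ^ 2 : ℝ) : ℂ) ≠ 0 := by exact_mod_cast hρ
  have hzw : (((r : ℝ) ^ 2 + a ^ 2 * c ^ 2 : ℝ) : ℂ)
      = ((r : ℂ) - Complex.I * a * c) * ((r : ℂ) + Complex.I * a * c) := by
    push_cast; linear_combination (a : ℂ) ^ 2 * c ^ 2 * hI2
  have hz1 : ((r : ℂ) - Complex.I * a * c) ≠ 0 := by
    intro h; apply hρC; rw [hzw, h, zero_mul]
  have hw1 : ((r : ℂ) + Complex.I * a * c) ≠ 0 := by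
    intro h; apply hρC; rw [hzw, h, mul_zero]
  have e1 : 𝕀 = 48 * (Complex.I * c * a * m + m * r - q ^ 2) ^ 2
      / ((((r : ℝ) ^ 2 + a ^ 2 * c ^ 2 : ℝ) : ℂ) ^ 2 * ((r : ℂ) - Complex.I * a * c) ^ 4) := by
    rw [hI]
    linear_combination (-(48 : ℂ) * a ^ 2 * c ^ 2 * m ^ 2
      / ((((r : ℝ) ^ 2 + a ^ 2 * c ^ 2 : ℝ) : ℂ) ^ 2 * ((r : ℂ) - Complex.I * a * c) ^ 4)) * hI2
  have e2 : 𝕂 = -(16 * (q : ℂ) ^ 4) * ((r : ℂ) + Complex.I * a * c) ^ 2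
      * (Complex.I * c * a * m + m * r - q ^ 2)
      / (((r : ℝ) ^ 2 + a ^ 2 * c ^ 2 : ℝ) : ℂ) ^ 7 := by
    rw [hK]; push_cast
    linear_combination (((-16 * (a:ℂ)^2*c^2*q^6 + 16*a^3*c^3*m*q^4*Complex.I
      + 48*r*a^2*c^2*m*q^4)) / ((r : ℂ) ^ 2 + a ^ 2 * c ^ 2) ^ 7) * hI2
  have e3 : (starRingEnd ℂ) 𝕂 = -(16 * (q : ℂ) ^ 4) * ((r : ℂ) - Complex.I * a * c) ^ 2
      * (-(Complex.I * c * a * m) + m * r - q ^ 2)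
      / (((r : ℝ) ^ 2 + a ^ 2 * c ^ 2 : ℝ) : ℂ) ^ 7 := by
    rw [hKc]; push_cast
    linear_combination (((-16 * (a:ℂ)^2*c^2*q^6 - 16*a^3*c^3*m*q^4*Complex.I
      + 48*r*a^2*c^2*m*q^4)) / ((r : ℂ) ^ 2 + a ^ 2 * c ^ 2) ^ 7) * hI2
  have hE : ((a : ℂ) ^ 2 * c ^ 2 + 2 * Complex.I * c * a * r - r ^ 2)
      = -(((r : ℂ) - Complex.I * a * c) ^ 2) := by
    linear_combination (a : ℂ) ^ 2 * c ^ 2 * hI2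
  have e4 : M2 = 8 * (q : ℂ) ^ 4
      * ((Complex.I * c * a * m + m * r - q ^ 2) * (-(Complex.I * c * a * m) + m * r - q ^ 2))
      * (Complex.I * c * a * m + m * r - q ^ 2)
      / ((((r : ℝ) ^ 2 + a ^ 2 * c ^ 2 : ℝ) : ℂ) ^ 9 * ((r : ℂ) - Complex.I * a * c) ^ 2) := by
    rw [hM2, hE, mul_neg, div_neg, neg_neg]
    linear_combination (8 * (q : ℂ) ^ 4 * (Complex.I * c * a * m + m * r - q ^ 2)
      * a ^ 2 * c ^ 2 * m ^ 2
      / ((((r : ℝ) ^ 2 + a ^ 2 * c ^ 2 : ℝ) : ℂ) ^ 9 * ((r : ℂ) - Complex.I * a * c) ^ 2)) * hI2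
  rw [e4, e1, e3, e2]
  push_cast
  have hzw' : ((r : ℂ) ^ 2 + (a : ℂ) ^ 2 * (c : ℂ) ^ 2)
      = ((r : ℂ) - Complex.I * a * c) * ((r : ℂ) + Complex.I * a * c) := by
    linear_combination (a : ℂ) ^ 2 * c ^ 2 * hI2
  rw [hzw']
  generalize hSb : (-(Complex.I * (c : ℂ) * a * m) + (m : ℂ) * r - (q : ℂ) ^ 2) = SB
  generalize hS : (Complex.I * (c : ℂ) * a * m + (m : ℂ) * r - (q : ℂ) ^ 2) = SS
  generalize hW : ((r : ℂ) + Complex.I * a * c) = W at hw1 ⊢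
  generalize hZ : ((r : ℂ) - Complex.I * a * c) = Z at hz1 ⊢
  have hZ34 : Z ^ 34 * Z⁻¹ ^ 34 = 1 := by
    rw [← mul_pow, mul_inv_cancel₀ hz1, one_pow]
  have hW30 : W ^ 30 * W⁻¹ ^ 30 = 1 := by
    rw [← mul_pow, mul_inv_cancel₀ hw1, one_pow]
  field_simp
  ring
end

section
/- Let $c = \cos\theta$ and $\rho^2 = r^2 + a^2 c^2 \neq 0$. For the accelerating Kerr–Newman–(anti)-de Sitter black hole the Ricci invariants satisfy $I_6 = \frac{4 q^4 (1 - \alpha r c)^8}{\rho^8} + 4\Lambda^2$, $I_7 = \frac{12 \Lambda q^4 (1 - \alpha r c)^8}{\rho^8} + 4\Lambda^3$, $I_8 = \frac{4 q^8 (1 - \alpha r c)^{16}}{\rho^{16}} + 4\left(\frac{12\Lambda q^4 (1-\alpha r c)^8}{\rho^8} + 4\Lambda^3\right)\Lambda - 6\left(\frac{4 q^4 (1-\alpha r c)^8}{\rho^8} + 4\Lambda^2\right)\Lambda^2 + 12\Lambda^4$, and $I_5 = 4\Lambda$. Then the syzygy $I_6^2 = 4 I_8 - \tfrac{4}{3}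 I_7 I_5 + \tfrac{1}{12} I_5^4$ holds. -/
/-- Ricci syzygy for the accelerating Kerr–Newman–(anti)-de Sitter black hole. -/
theorem ricci_syzygy_accel_KNdS
    (r θ a m q Λ α : ℝ) (c ρ2 : ℝ)
    (hc : c = Real.cos θ) (hρ2 : ρ2 = r ^ 2 + a ^ 2 * c ^ 2) (hρ : ρ2 ≠ 0)
    (I5 I6 I7 I8 : ℝ)
    (hI5 : I5 = 4 * Λ)
    (hI6 : I6 = 4 * q ^ 4 * (1 - α * r * c) ^ 8 / ρ2 ^ 4 + 4 * Λ ^ 2)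
    (hI7 : I7 = 12 * Λ * q ^ 4 * (1 - α * r * c) ^ 8 / ρ2 ^ 4 + 4 * Λ ^ 3)
    (hI8 : I8 = 4 * q ^ 8 * (1 - α * r * c) ^ 16 / ρ2 ^ 8
        + 4 * (12 * Λ * q ^ 4 * (1 - α * r * c) ^ 8 / ρ2 ^ 4 + 4 * Λ ^ 3) * Λ
        - 6 * (4 * q ^ 4 * (1 - α * r * c) ^ 8 / ρ2 ^ 4 + 4 * Λ ^ 2) * Λ ^ 2
        + 12 * Λ ^ 4) :
    I6 ^ 2 = 4 * I8 - (4 / 3) * I7 * I5 + (1 / 12) * I5 ^ 4 := by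
  subst hI5 hI6 hI7 hI8
  field_simp
  ring
end

section
/- Let $c = \cos\theta$, $a, m, q, r \in \mathbb{R}$ with $\rho^2 = r^2 + a^2 c^2 \neq 0$ and $r - i a c \neq 0$. With $\Psi_2 = -\frac{i c m a + m r - q^2}{(r - i a c)^3 (r + i a c)}$, the complex invariant $\mathbb{I} = 48 \Psi_2^2$ satisfies: the imaginary part of $\mathbb{I}$ equals $-K_2$, where $K_2 = \frac{96 a}{\rho^{12}}(a^2 m c^3 - 3 m r^2 c + 2 q^2 r c)(-3 a^2 c^2 m r + a^2 c^2 q^2 + m r^3 - q^2 r^2)$. In particular, if $a = 0$ then $\Psi_2$ is real and $K_2 = 0$. -/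
open Complex

set_option maxHeartbeats 1000000

/-- The imaginary part of `𝕀 = 48 Ψ₂²` equals `-K₂`, and for `a = 0` the Weyl scalar
is real and the Chern–Pontryagin invariant vanishes. -/
theorem im_of_I_eq_neg_K2
    (r θ a m q : ℝ) (c ρ2 : ℝ)
    (hc : c = Real.cos θ) (hρ2 : ρ2 = r ^ 2 + a ^ 2 * c ^ 2) (hρ : ρ2 ≠ 0)
    (hrac : (r : ℂ) - Complex.I * a * c ≠ 0)
    (Ψ2 : ℂ) (K2 : ℝ)
    (hΨ2 : Ψ2 = -((Complex.I * c * m * a + m * r - q ^ 2) /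
        (((r : ℂ) - Complex.I * a * c) ^ 3 * ((r : ℂ) + Complex.I * a * c))))
    (hK2 : K2 = (96 * a / ρ2 ^ 6) *
      (a ^ 2 * m * c ^ 3 - 3 * m * r ^ 2 * c + 2 * q ^ 2 * r * c) *
      (-(3 * a ^ 2 * c ^ 2 * m * r) + a ^ 2 * c ^ 2 * q ^ 2 + m * r ^ 3 - q ^ 2 * r ^ 2)) :
    (48 * Ψ2 ^ 2).im = -K2 ∧ (a = 0 → Ψ2.im = 0 ∧ K2 = 0) := by
  subst hρ2
  have hNS2 : Complex.normSq ((((r : ℂ) - Complex.I * a * c) ^ 3 *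
      ((r : ℂ) + Complex.I * a * c)) ^ 2) = (r ^ 2 + a ^ 2 * c ^ 2) ^ 8 := by
    simp only [map_mul, map_pow, Complex.normSq_apply, Complex.sub_re, Complex.sub_im,
      Complex.add_re, Complex.add_im, Complex.mul_re, Complex.mul_im, Complex.I_re,
      Complex.I_im, Complex.ofReal_re, Complex.ofReal_im]
    ring
  constructor
  · subst hΨ2 hK2
    rw [neg_pow, show (-1:ℂ)^2 = 1 by ring, one_mul, div_pow, ← mul_div_assoc,
      Complex.div_im, hNS2]
    simp only [Complex.mul_im, Complex.mul_re, Complex.add_im, Complex.add_re, Complex.sub_im,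
      Complex.sub_re, Complex.I_re, Complex.I_im, Complex.ofReal_re, Complex.ofReal_im,
      pow_succ, pow_zero, one_mul, Complex.re_ofNat, Complex.im_ofNat]
    have hP : r * r + a * a * (c * c) ≠ 0 := by
      intro h; apply hρ; nlinarith [h]
    obtain ⟨D, hD⟩ : ∃ D, D = r * r + a * a * (c * c) := ⟨_, rfl⟩
    rw [← hD] at hP ⊢
    field_simp
    subst hD
    ring
  · intro ha
    subst ha hΨ2 hK2
    simp [Complex.div_im, Complex.normSq_apply, Complex.mul_im, Complex.mul_re,
      ← Complex.ofReal_pow]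
end
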